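/- The critical cardinalities of the properties Sfin(Γ,Τ) and Sfin(C_Γ,C_Τ) are both equal to the bounding number 𝔟; that is, the minimal cardinality of a space not satisfying Sfin(Γ,Τ) equals 𝔟, and likewise for Sfin(C_Γ,C_Τ). -/

import Mathlib

open Set Filter Cardinal
open scoped Classical

noncomputable section

/-- The Cantor space `2^ℕ`. -/
abbrev Cantor := ℕ → Bool

/-- Arrays: elements of `2^(ℕ×ℕ)`. -/
abbrev Arr := ℕ × ℕ → Bool

/-- A γ-array: every row is eventually 1. -/
def IsGammaArray (A : Arr) : Prop := ∀ n, ∀ᶠ m in atTop, A (n, m) = true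

/-- A γ-family: a set of γ-arrays. -/
def GammaFamily (𝒜 : Set Arr) : Prop := ∀ A ∈ 𝒜, IsGammaArray A

/-- A family of arrays is finitely τ-diagonalizable. -/
def FinTauDiag (𝒜 : Set Arr) : Prop :=
  ∃ F : ℕ → Finset ℕ,
    (∀ A ∈ 𝒜, ∃ᶠ n in atTop, ∃ m ∈ F n, A (n, m) = true) ∧
    (∀ A ∈ 𝒜, ∀ B ∈ 𝒜,
      (∀ᶠ n in atTop, ∀ m ∈ F n, A (n, m) ≤ B (n, m)) ∨
      (∀ᶠ n in atTop, ∀ m ∈ F n, B (n, m) ≤ A (n, m)))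

/-- A family of arrays is semi τ-diagonalizable (via a partial function with domain `D`). -/
def SemiTauDiag (𝒜 : Set Arr) : Prop :=
  ∃ (D : Set ℕ) (g : ℕ → ℕ),
    (∀ A ∈ 𝒜, ∃ᶠ n in atTop, n ∈ D ∧ A (n, g n) = true) ∧
    (∀ A ∈ 𝒜, ∀ B ∈ 𝒜,
      (∀ᶠ n in atTop, n ∈ D → A (n, g n) ≤ B (n, g n)) ∨
      (∀ᶠ n in atTop, n ∈ D → B (n, g n) ≤ A (n, g n)))

/-- A τ-family of arrays. -/
def TauFamily (𝒜 : Set Arr) : Prop :=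
  (∀ A ∈ 𝒜, ∀ n, ∃ᶠ m in atTop, A (n, m) = true) ∧
  (∀ A ∈ 𝒜, ∀ B ∈ 𝒜, ∀ n,
    (∀ᶠ m in atTop, A (n, m) ≤ B (n, m)) ∨
    (∀ᶠ m in atTop, B (n, m) ≤ A (n, m)))

/-- A family of arrays is τ-diagonalizable. -/
def TauDiag (𝒜 : Set Arr) : Prop :=
  ∃ g : ℕ → ℕ,
    (∀ A ∈ 𝒜, ∃ᶠ n in atTop, A (n, g n) = true) ∧
    (∀ A ∈ 𝒜, ∀ B ∈ 𝒜,
      (∀ᶠ n in atTop, A (n, g n) ≤ B (n, g n)) ∨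
      (∀ᶠ n in atTop, B (n, g n) ≤ A (n, g n)))

/-- A family of arrays is o-diagonalizable. -/
def ODiag (𝒜 : Set Arr) : Prop :=
  ∃ g : ℕ → ℕ, ∀ A ∈ 𝒜, ∃ n, A (n, g n) = true

/-- An ω-family of arrays: rows frequently 1 and, for each `n`,
the family of the `n`-th rows is centered. -/
def OmegaFamily (𝒜 : Set Arr) : Prop :=
  (∀ A ∈ 𝒜, ∀ n, ∃ᶠ m in atTop, A (n, m) = true) ∧
  (∀ n, ∀ 𝒜' ⊆ 𝒜, 𝒜'.Finite → {m | ∀ A ∈ 𝒜', A (n, m) = true}.Infinite)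

/-- The bounding number 𝔟. -/
def bNum : Cardinal :=
  sInf {c | ∃ F : Set (ℕ → ℕ), Cardinal.mk F = c ∧
    ¬ ∃ g : ℕ → ℕ, ∀ f ∈ F, ∀ᶠ n in atTop, f n ≤ g n}

/-- The splitting number 𝔰. -/
def sNum : Cardinal :=
  sInf {c | ∃ S : Set (Set ℕ), Cardinal.mk S = c ∧ (∀ s ∈ S, s.Infinite) ∧
    ∀ a : Set ℕ, a.Infinite → ∃ s ∈ S, (a ∩ s).Infinite ∧ (a \ s).Infinite}

/-- The tower number 𝔱. -/
def tNum : Cardinal :=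
  sInf {c | ∃ T : Set (Set ℕ), Cardinal.mk T = c ∧ (∀ t ∈ T, t.Infinite) ∧
    (∀ a ∈ T, ∀ b ∈ T, (a \ b).Finite ∨ (b \ a).Finite) ∧
    ¬ ∃ a : Set ℕ, a.Infinite ∧ ∀ t ∈ T, (a \ t).Finite}

/-- cov(M): the least number of meager sets covering the Baire space. -/
def covM : Cardinal :=
  sInf {c | ∃ 𝒞 : Set (Set (ℕ → ℕ)), Cardinal.mk 𝒞 = c ∧
    (∀ M ∈ 𝒞, IsMeagre M) ∧ ⋃₀ 𝒞 = Set.univ}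

/-- The o-diagonalization number: the minimal cardinality of a τ-family
which is not o-diagonalizable. -/
def odNum : Cardinal :=
  sInf {c | ∃ 𝒜 : Set Arr, Cardinal.mk 𝒜 = c ∧ TauFamily 𝒜 ∧ ¬ ODiag 𝒜}

section Covers

variable (α : Type*)

/-- A countable cover of the space `α`. -/
def CountCover (𝒰 : Set (Set α)) : Prop :=
  𝒰.Countable ∧ ⋃₀ 𝒰 = Set.univ ∧ Set.univ ∉ 𝒰

/-- A (countable) γ-cover. -/
def GammaCover (𝒰 : Set (Set α)) : Prop :=
  CountCover α 𝒰 ∧ 𝒰.Infinite ∧ ∀ x : α, {U | U ∈ 𝒰 ∧ x ∉ U}.Finite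

/-- A (countable) τ-cover. -/
def TauCover (𝒰 : Set (Set α)) : Prop :=
  CountCover α 𝒰 ∧ (∀ x : α, {U | U ∈ 𝒰 ∧ x ∈ U}.Infinite) ∧
  ∀ x y : α, {U | U ∈ 𝒰 ∧ x ∈ U ∧ y ∉ U}.Finite ∨ {U | U ∈ 𝒰 ∧ y ∈ U ∧ x ∉ U}.Finite

/-- A (countable) ω-cover. -/
def OmegaCover (𝒰 : Set (Set α)) : Prop :=
  CountCover α 𝒰 ∧ ∀ F : Set α, F.Finite → ∃ U ∈ 𝒰, F ⊆ U

variable [TopologicalSpace α]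

/-- All members are open. -/
def OpenFam (𝒰 : Set (Set α)) : Prop := ∀ U ∈ 𝒰, IsOpen U

/-- All members are clopen. -/
def ClopenFam (𝒰 : Set (Set α)) : Prop := ∀ U ∈ 𝒰, IsClopen U

/-- The class O of countable open covers. -/
def OCov (𝒰 : Set (Set α)) : Prop := CountCover α 𝒰 ∧ OpenFam α 𝒰
/-- The class Γ of countable open γ-covers. -/
def OGamma (𝒰 : Set (Set α)) : Prop := GammaCover α 𝒰 ∧ OpenFam α 𝒰
/-- The class Τ of countable open τ-covers. -/
def OTau (𝒰 : Set (Set α)) : Prop := TauCover α 𝒰 ∧ OpenFam α 𝒰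
/-- The class Ω of countable open ω-covers. -/
def OOmega (𝒰 : Set (Set α)) : Prop := OmegaCover α 𝒰 ∧ OpenFam α 𝒰

/-- The class C of countable clopen covers. -/
def KCov (𝒰 : Set (Set α)) : Prop := CountCover α 𝒰 ∧ ClopenFam α 𝒰
/-- The class C_Γ of countable clopen γ-covers. -/
def KGamma (𝒰 : Set (Set α)) : Prop := GammaCover α 𝒰 ∧ ClopenFam α 𝒰
/-- The class C_Τ of countable clopen τ-covers. -/
def KTau (𝒰 : Set (Set α)) : Prop := TauCover α 𝒰 ∧ ClopenFam α 𝒰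

end Covers

/-- The selection principle S1(𝒜,ℬ). -/
def S1 (α : Type*) (𝒜 ℬ : Set (Set α) → Prop) : Prop :=
  ∀ U : ℕ → Set (Set α), (∀ n, 𝒜 (U n)) →
    ∃ V : ℕ → Set α, (∀ n, V n ∈ U n) ∧ ℬ (range V)

/-- The selection principle Sfin(𝒜,ℬ). -/
def SFin (α : Type*) (𝒜 ℬ : Set (Set α) → Prop) : Prop :=
  ∀ U : ℕ → Set (Set α), (∀ n, 𝒜 (U n)) →
    ∃ F : ℕ → Set (Set α), (∀ n, (F n).Finite ∧ F n ⊆ U n) ∧ ℬ (⋃ n, F n)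

/-- The selection principle Ufin(𝒜,ℬ). -/
def UFin (α : Type*) (𝒜 ℬ : Set (Set α) → Prop) : Prop :=
  ∀ U : ℕ → Set (Set α), (∀ n, 𝒜 (U n)) →
    (∀ n, ¬ ∃ F : Set (Set α), F ⊆ U n ∧ F.Finite ∧ ⋃₀ F = Set.univ) →
    ∃ F : ℕ → Set (Set α), (∀ n, (F n).Finite ∧ F n ⊆ U n) ∧
      ℬ (range fun n => ⋃₀ F n)

/-- The critical cardinality non(P) of a property `P` of sets of reals:
the minimal cardinality of an infinite subset of the Cantor space not satisfying `P`. -/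
def nonP (P : Set Cantor → Prop) : Cardinal :=
  sInf {c | ∃ X : Set Cantor, X.Infinite ∧ ¬ P X ∧ Cardinal.mk X = c}

/-- The collection of cardinalities of witnessing families of `f`-sequences for `θ_f`. -/
def ThetaSet (f : ℕ → ℕ) : Set Cardinal :=
  {c | ∃ ℱ : Set (ℕ → Set ℕ), Cardinal.mk ℱ = c ∧
    (∀ σ ∈ ℱ, ∀ n, σ n ⊆ Iio (f n)) ∧
    (∀ σ ∈ ℱ, ∀ᶠ n in atTop, (σ n).Nonempty) ∧
    (∀ σ ∈ ℱ, ∀ η ∈ ℱ, (∀ᶠ n in atTop, σ n ⊆ η n) ∨ (∀ᶠ n in atTop, η n ⊆ σ n)) ∧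
    ¬ ∃ g : ℕ → ℕ, ∀ σ ∈ ℱ, ∃ n, g n ∈ σ n}

/-- The cardinal θ_f; equal to 𝔠⁺ if no witnessing family exists. -/
def theta (f : ℕ → ℕ) : Cardinal :=
  if (ThetaSet f).Nonempty then sInf (ThetaSet f) else Order.succ Cardinal.continuum

/-- θ* = min over f (with all values ≥ 2) of θ_f. -/
def thetaStar : Cardinal :=
  sInf {c | ∃ f : ℕ → ℕ, (∀ n, 2 ≤ f n) ∧ theta f = c}

/-- The collection of cardinalities of witnessing families for `𝔈_f`. -/
def ESet (f : ℕ → ℕ) : Set Cardinal :=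
  {c | ∃ F : Set (ℕ → ℕ), Cardinal.mk F = c ∧ (∀ h ∈ F, ∀ n, h n < f n) ∧
    ∀ g : ℕ → ℕ, ∃ h ∈ F, ∀ n, h n ≠ g n}

/-- The cardinal 𝔈_f; equal to 𝔠⁺ if no witnessing family exists. -/
def ENum (f : ℕ → ℕ) : Cardinal :=
  if (ESet f).Nonempty then sInf (ESet f) else Order.succ Cardinal.continuum

/-- 𝔈* = min over f (with all values ≥ 1) of 𝔈_f. -/
def EStar : Cardinal :=
  sInf {c | ∃ f : ℕ → ℕ, (∀ n, 1 ≤ f n) ∧ ENum f = c}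


section StmtThreeAux

open Filter Set Cardinal

/-! ### Basic facts about `bNum` -/

private lemma bNum_set_nonempty :
    {c | ∃ F : Set (ℕ → ℕ), Cardinal.mk F = c ∧
      ¬ ∃ g : ℕ → ℕ, ∀ f ∈ F, ∀ᶠ n in atTop, f n ≤ g n}.Nonempty := by
  refine ⟨_, Set.univ, rfl, ?_⟩
  rintro ⟨g, hg⟩
  obtain ⟨n, hn⟩ := (hg (fun n => g n + 1) (Set.mem_univ _)).exists
  omega

private lemma bNum_le_of_unbounded (F : Set (ℕ → ℕ))
    (h : ¬ ∃ g : ℕ → ℕ, ∀ f ∈ F, ∀ᶠ n in atTop, f n ≤ g n) : bNum ≤ Cardinal.mk F :=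
  csInf_le' ⟨F, rfl, h⟩

private lemma bounded_of_mk_lt_bNum (F : Set (ℕ → ℕ)) (h : Cardinal.mk F < bNum) :
    ∃ g : ℕ → ℕ, ∀ f ∈ F, ∀ᶠ n in atTop, f n ≤ g n := by
  by_contra hc
  exact absurd (bNum_le_of_unbounded F hc) (not_le.mpr h)

private lemma aleph0_le_bNum : ℵ₀ ≤ bNum := by
  refine le_csInf bNum_set_nonempty ?_
  rintro c ⟨F, rfl, hunb⟩
  have hFinf : F.Infinite := by
    intro hfin
    apply hunb
    refine ⟨fun n => hfin.toFinset.sup (fun f => f n), fun f hf => ?_⟩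
    exact Filter.Eventually.of_forall
      (fun n => Finset.le_sup (f := fun f' => f' n) (hfin.mem_toFinset.mpr hf))
  have := hFinf.to_subtype
  exact Cardinal.aleph0_le_mk ↥F

private lemma exists_good_family :
    ∃ G : Set (ℕ → ℕ), (∀ f ∈ G, Monotone f) ∧
      (¬ ∃ g : ℕ → ℕ, ∀ f ∈ G, ∀ᶠ n in atTop, f n ≤ g n) ∧
      Cardinal.mk G = bNum ∧ G.Nonempty := by
  obtain ⟨F₀, hmk, hunb⟩ := csInf_mem bNum_set_nonempty
  set G : Set (ℕ → ℕ) := (fun f => fun n => (Finset.range (n+1)).sup f) '' F₀ with hG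
  have hle : ∀ f : ℕ → ℕ, ∀ n, f n ≤ (Finset.range (n+1)).sup f := fun f n =>
    Finset.le_sup (Finset.mem_range.mpr (Nat.lt_succ_self n))
  have hGunb : ¬ ∃ g : ℕ → ℕ, ∀ f ∈ G, ∀ᶠ n in atTop, f n ≤ g n := by
    rintro ⟨g, hg⟩
    apply hunb
    refine ⟨g, fun f hf => ?_⟩
    exact (hg _ ⟨f, hf, rfl⟩).mono (fun n hn => le_trans (hle f n) hn)
  have hmono : ∀ f ∈ G, Monotone f := by
    rintro _ ⟨f, hf, rfl⟩ a b hab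
    exact Finset.sup_mono (Finset.range_subset_range.mpr (by omega))
  have hmkG : Cardinal.mk G = bNum := by
    apply le_antisymm
    · calc Cardinal.mk G ≤ Cardinal.mk F₀ := Cardinal.mk_image_le
        _ = bNum := hmk
    · exact bNum_le_of_unbounded G hGunb
  have hne : G.Nonempty := by
    rcases Set.eq_empty_or_nonempty F₀ with h | h
    · exact absurd ⟨0, by simp [h]⟩ hunb
    · exact h.image _
  exact ⟨G, hmono, hGunb, hmkG, hne⟩

/-! ### The generic "small implies Sfin(Γ,Τ)" lemma -/

private lemma sfin_of_small (X : Set Cantor) (hX : Cardinal.mk X < bNum) (P : Set ↥X → Prop) :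
    SFin ↥X (fun 𝒰 => GammaCover ↥X 𝒰 ∧ ∀ U ∈ 𝒰, P U)
            (fun 𝒰 => TauCover ↥X 𝒰 ∧ ∀ U ∈ 𝒰, P U) := by
  intro U hU
  have hinf : ∀ n, (U n).Infinite := fun n => (hU n).1.2.1
  set e : ℕ → ℕ → Set ↥X := fun n k => ((Set.Infinite.natEmbedding (U n) (hinf n)) k : Set ↥X)
    with he
  have hemem : ∀ n k, e n k ∈ U n := fun n k => ((Set.Infinite.natEmbedding (U n) (hinf n)) k).2
  have heinj : ∀ n, Function.Injective (e n) := by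
    intro n a b hab
    exact (Set.Infinite.natEmbedding (U n) (hinf n)).injective (Subtype.coe_injective hab)
  have hbadfin : ∀ (x : ↥X) (n : ℕ), {k | x ∉ e n k}.Finite := by
    intro x n
    have h1 : {k | x ∉ e n k} = (e n) ⁻¹' {V | V ∈ U n ∧ x ∉ V} := by
      ext k
      simp only [Set.mem_setOf_eq, Set.mem_preimage]
      exact ⟨fun h => ⟨hemem n k, h⟩, fun h => h.2⟩
    rw [h1]
    exact Set.Finite.preimage ((heinj n).injOn) ((hU n).1.2.2 x)
  set hbar : ↥X → ℕ → ℕ := fun x n => ((hbadfin x n).toFinset.sup id) + 1 with hhbar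
  have hbarP : ∀ (x : ↥X) (n k : ℕ), hbar x n ≤ k → x ∈ e n k := by
    intro x n k hk
    by_contra hc
    have h1 : k ∈ (hbadfin x n).toFinset := (Set.Finite.mem_toFinset _).mpr hc
    have h2 := Finset.le_sup (f := id) h1
    simp only [id] at h2
    simp only [hhbar] at hk
    omega
  obtain ⟨g, hg⟩ := bounded_of_mk_lt_bNum (Set.range hbar)
      (lt_of_le_of_lt Cardinal.mk_range_le hX)
  have hgx : ∀ x : ↥X, ∀ᶠ n in atTop, x ∈ e n (g n) :=
    fun x => (hg (hbar x) ⟨x, rfl⟩).mono (fun n hn => hbarP x n (g n) hn)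
  refine ⟨fun n => {e n (g n)}, fun n => ⟨Set.finite_singleton _, ?_⟩, ?_⟩
  · rintro V hV
    rw [Set.mem_singleton_iff] at hV
    rw [hV]
    exact hemem n (g n)
  rw [Set.iUnion_singleton_eq_range]
  set V : ℕ → Set ↥X := fun n => e n (g n) with hV
  have hnuniv : Set.univ ∉ Set.range V := by
    rintro ⟨n, hn⟩
    have h1 := (hU n).1.1.2.2
    rw [← hn] at h1
    exact h1 (hemem n (g n))
  have hcompl : ∀ x : ↥X, {n | x ∉ V n}.Finite := by
    intro x
    have h1 := hgx x
    rw [← Nat.cofinite_eq_atTop] at h1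
    exact Filter.eventually_cofinite.mp h1
  have hio : ∀ x : ↥X, {W | W ∈ Set.range V ∧ x ∈ W}.Infinite := by
    intro x hfin
    have hTinf : {n | x ∈ V n}.Infinite := by
      have h2 := (hcompl x).infinite_compl
      have h3 : {n | x ∉ V n}ᶜ = {n | x ∈ V n} := by
        ext n; simp
      rwa [h3] at h2
    have hcover : {n | x ∈ V n} ⊆ ⋃ W ∈ {W | W ∈ Set.range V ∧ x ∈ W}, {n | V n = W} :=
      fun n hn => Set.mem_biUnion ⟨⟨n, rfl⟩, hn⟩ rfl
    by_cases hallfin : ∀ W ∈ {W | W ∈ Set.range V ∧ x ∈ W}, {n | V n = W}.Finite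
    · exact hTinf (Set.Finite.subset (Set.Finite.biUnion hfin hallfin) hcover)
    · push_neg at hallfin
      obtain ⟨W, hW, hWinf⟩ := hallfin
      have hWuniv : W = Set.univ := by
        apply Set.eq_univ_of_forall
        intro y
        obtain ⟨n, hn⟩ := (Set.Infinite.diff hWinf (hcompl y)).nonempty
        have hy : y ∈ V n := by
          by_contra hc
          exact hn.2 hc
        rwa [hn.1] at hy
      exact hnuniv (hWuniv ▸ hW.1)
  refine ⟨⟨⟨Set.countable_range V, ?_, hnuniv⟩, hio, ?_⟩, ?_⟩
  · apply Set.eq_univ_of_forall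
    intro x
    obtain ⟨n, hn⟩ := (hgx x).exists
    exact ⟨V n, ⟨n, rfl⟩, hn⟩
  · intro x y
    left
    refine ((hcompl y).image V).subset ?_
    rintro W ⟨⟨n, rfl⟩, _, hyW⟩
    exact ⟨n, hyW, rfl⟩
  · rintro W ⟨n, rfl⟩
    exact (hU n).2 _ (hemem n (g n))

/-! ### The witness space of cardinality 𝔟 failing Sfin(C_Γ, C_Τ) -/

private def Gfam : Set (ℕ → ℕ) := exists_good_family.choose

private lemma Gfam_mono : ∀ f ∈ Gfam, Monotone f := exists_good_family.choose_spec.1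
private lemma Gfam_unb : ¬ ∃ g : ℕ → ℕ, ∀ f ∈ Gfam, ∀ᶠ n in atTop, f n ≤ g n :=
  exists_good_family.choose_spec.2.1
private lemma Gfam_mk : Cardinal.mk Gfam = bNum := exists_good_family.choose_spec.2.2.1
private lemma Gfam_ne : Gfam.Nonempty := exists_good_family.choose_spec.2.2.2

private def AArr (f : ℕ → ℕ) : Arr := fun p => decide (f p.1 ≤ p.2)
private def BArr (f g : ℕ → ℕ) : Arr := fun p => decide (p.2 < f p.1 ∨ g p.1 ≤ p.2)
private def PArr (q : ℕ × ℕ) : Arr := fun p => decide (p ≠ q)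

private lemma AArr_true {f : ℕ → ℕ} {p : ℕ × ℕ} : AArr f p = true ↔ f p.1 ≤ p.2 := by
  simp [AArr]

private lemma AArr_false {f : ℕ → ℕ} {p : ℕ × ℕ} : AArr f p = false ↔ p.2 < f p.1 := by
  rw [← Bool.not_eq_true, AArr_true]
  omega

private lemma BArr_true {f g : ℕ → ℕ} {p : ℕ × ℕ} :
    BArr f g p = true ↔ (p.2 < f p.1 ∨ g p.1 ≤ p.2) := by
  simp [BArr]

private lemma BArr_false {f g : ℕ → ℕ} {p : ℕ × ℕ} :
    BArr f g p = false ↔ (f p.1 ≤ p.2 ∧ p.2 < g p.1) := by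
  rw [← Bool.not_eq_true, BArr_true]
  omega

private lemma AArr_true' {f : ℕ → ℕ} {n m : ℕ} : AArr f (n, m) = true ↔ f n ≤ m := by
  simp [AArr]

private lemma BArr_true' {f g : ℕ → ℕ} {n m : ℕ} :
    BArr f g (n, m) = true ↔ (m < f n ∨ g n ≤ m) := by
  simp [BArr]

private lemma PArr_true {q p : ℕ × ℕ} : PArr q p = true ↔ p ≠ q := by
  simp [PArr]

private lemma AArr_inj : Function.Injective AArr := by
  intro f g h
  funext n
  have h1 := congrFun h (n, f n)
  have h2 := congrFun h (n, g n)
  simp only [AArr, decide_eq_decide] at h1 h2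
  omega

private def 𝒜w : Set Arr :=
  {A | (∃ f ∈ Gfam, A = AArr f) ∨ (∃ f ∈ Gfam, ∃ g ∈ Gfam, A = BArr f g) ∨ ∃ q : ℕ × ℕ, A = PArr q}

private lemma memA {f : ℕ → ℕ} (hf : f ∈ Gfam) : AArr f ∈ 𝒜w := Or.inl ⟨f, hf, rfl⟩
private lemma memB {f g : ℕ → ℕ} (hf : f ∈ Gfam) (hg : g ∈ Gfam) : BArr f g ∈ 𝒜w :=
  Or.inr (Or.inl ⟨f, hf, g, hg, rfl⟩)
private lemma memP (q : ℕ × ℕ) : PArr q ∈ 𝒜w := Or.inr (Or.inr ⟨q, rfl⟩)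

private def iow : Arr → Cantor := fun A k => A (Nat.pairEquiv.symm k)

private lemma iow_inj : Function.Injective iow := by
  intro A B h
  funext p
  have h1 := congrFun h (Nat.pairEquiv p)
  simp only [iow, Equiv.symm_apply_apply] at h1
  exact h1

private def Xw : Set Cantor := iow '' 𝒜w

private def UUw (n m : ℕ) : Set ↥Xw := {x | (x : Cantor) (Nat.pairEquiv (n, m)) = true}

private def ptw (A : Arr) (hA : A ∈ 𝒜w) : ↥Xw := ⟨iow A, ⟨A, hA, rfl⟩⟩

private lemma ptw_mem {A : Arr} {hA : A ∈ 𝒜w} {n m : ℕ} :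
    ptw A hA ∈ UUw n m ↔ A (n, m) = true := by
  simp [UUw, ptw, iow]

private lemma mem_UUw_iff {x : ↥Xw} {A : Arr} (h : iow A = ↑x) {n m : ℕ} :
    x ∈ UUw n m ↔ A (n, m) = true := by
  show (↑x : Cantor) _ = true ↔ _
  rw [← h]
  simp [iow]

private lemma UUw_inj : Function.Injective (fun p : ℕ × ℕ => UUw p.1 p.2) := by
  intro p q hpq
  by_contra hne
  simp only at hpq
  have h1 : ptw (PArr p) (memP p) ∉ UUw p.1 p.2 := by
    rw [ptw_mem, PArr_true]
    simp
  have h2 : ptw (PArr p) (memP p) ∈ UUw q.1 q.2 := by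
    rw [ptw_mem, PArr_true]
    exact fun hc => hne (hc ▸ rfl)
  rw [hpq] at h1
  exact h1 h2

private lemma UUw_col_inj (n : ℕ) : Function.Injective (fun m => UUw n m) := by
  intro a b hab
  have h1 : ((n, a) : ℕ × ℕ) = (n, b) := UUw_inj hab
  exact (Prod.mk.injEq _ _ _ _ ▸ h1).2

private def Uw (n : ℕ) : Set (Set ↥Xw) := Set.range (fun m => UUw n m)

private lemma row_one {A : Arr} (hA : A ∈ 𝒜w) (n : ℕ) : ∃ m, A (n, m) = true := by
  rcases hA with ⟨f, _, rfl⟩ | ⟨f, _, g, _, rfl⟩ | ⟨q, rfl⟩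
  · exact ⟨f n, by simp [AArr]⟩
  · exact ⟨g n, by simp [BArr]⟩
  · exact ⟨q.2 + 1, by simp [PArr, Prod.ext_iff]⟩

private lemma row_fin {A : Arr} (hA : A ∈ 𝒜w) (n : ℕ) : {m | A (n, m) = false}.Finite := by
  rcases hA with ⟨f, _, rfl⟩ | ⟨f, _, g, _, rfl⟩ | ⟨q, rfl⟩
  · refine (Set.finite_Iio (f n)).subset ?_
    intro m hm
    rw [Set.mem_setOf_eq, AArr_false] at hm
    exact hm
  · refine (Set.finite_Iio (g n)).subset ?_
    intro m hm
    rw [Set.mem_setOf_eq, BArr_false] at hm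
    exact hm.2
  · refine (Set.finite_singleton q.2).subset ?_
    intro m hm
    simp only [Set.mem_setOf_eq, PArr, decide_eq_false_iff_not, not_not] at hm
    rw [Set.mem_singleton_iff, ← hm]

private lemma Uw_KGamma (n : ℕ) : KGamma ↥Xw (Uw n) := by
  have hcov : ⋃₀ Uw n = Set.univ := by
    apply Set.eq_univ_of_forall
    intro x
    obtain ⟨A, hA, hval⟩ := x.2
    obtain ⟨m, hm⟩ := row_one hA n
    exact ⟨UUw n m, ⟨m, rfl⟩, (mem_UUw_iff hval).mpr hm⟩
  have hnuniv : Set.univ ∉ Uw n := by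
    rintro ⟨m, hm⟩
    dsimp only at hm
    have h1 : ptw (PArr (n, m)) (memP _) ∉ UUw n m := by
      rw [ptw_mem, PArr_true]
      simp
    rw [hm] at h1
    exact h1 (Set.mem_univ _)
  have hinf : (Uw n).Infinite := Set.infinite_range_of_injective (UUw_col_inj n)
  have hfin : ∀ x : ↥Xw, {U | U ∈ Uw n ∧ x ∉ U}.Finite := by
    intro x
    obtain ⟨A, hA, hval⟩ := x.2
    refine ((row_fin hA n).image (fun m => UUw n m)).subset ?_
    rintro W ⟨⟨m, rfl⟩, hxW⟩
    refine ⟨m, ?_, rfl⟩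
    rw [Set.mem_setOf_eq, ← Bool.not_eq_true]
    exact fun hc => hxW ((mem_UUw_iff hval).mpr hc)
  have hclop : ∀ U ∈ Uw n, IsClopen U := by
    rintro W ⟨m, rfl⟩
    have h1 : IsClopen ((fun y : Cantor => y (Nat.pairEquiv (n, m))) ⁻¹' {true}) :=
      (isClopen_discrete _).preimage (continuous_apply _)
    exact h1.preimage continuous_subtype_val
  exact ⟨⟨⟨Set.countable_range _, hcov, hnuniv⟩, hinf, hfin⟩, hclop⟩

private lemma Xw_not_SFinK : ¬ SFin ↥Xw (KGamma ↥Xw) (KTau ↥Xw) := by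
  intro hSF
  obtain ⟨F, hF, hTau⟩ := hSF Uw Uw_KGamma
  set Pk : Set (ℕ × ℕ) := {p | UUw p.1 p.2 ∈ F p.1} with hPkdef
  have hUdec : ∀ U ∈ ⋃ n, F n, ∃ p ∈ Pk, U = UUw p.1 p.2 := by
    intro U hU
    obtain ⟨n, hn⟩ := Set.mem_iUnion.mp hU
    obtain ⟨m, rfl⟩ := (hF n).2 hn
    exact ⟨(n, m), hn, rfl⟩
  have hmem𝒱 : ∀ p ∈ Pk, UUw p.1 p.2 ∈ ⋃ n, F n := fun p hp => Set.mem_iUnion.mpr ⟨p.1, hp⟩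
  -- hits
  have hits : ∀ (A : Arr) (hA : A ∈ 𝒜w), {p | p ∈ Pk ∧ A (p.1, p.2) = true}.Infinite := by
    intro A hA hfin
    apply hTau.1.2.1 (ptw A hA)
    refine (hfin.image (fun p : ℕ × ℕ => UUw p.1 p.2)).subset ?_
    rintro U ⟨hU𝒱, hxU⟩
    obtain ⟨p, hp, rfl⟩ := hUdec U hU𝒱
    exact ⟨p, ⟨hp, by rwa [ptw_mem] at hxU⟩, rfl⟩
  -- dichotomy: from one infinite window, all later windows are finite
  have poke : ∀ f g : ℕ → ℕ, f ∈ Gfam → g ∈ Gfam →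
      {p | p ∈ Pk ∧ f p.1 ≤ p.2 ∧ p.2 < g p.1}.Infinite →
      ∀ h ∈ Gfam, {p | p ∈ Pk ∧ g p.1 ≤ p.2 ∧ p.2 < h p.1}.Finite := by
    intro f g hf hg hinf h hh
    rcases hTau.1.2.2 (ptw (BArr f g) (memB hf hg)) (ptw (BArr g h) (memB hg hh)) with hc | hc
    · have hsub : {p | p ∈ Pk ∧ g p.1 ≤ p.2 ∧ p.2 < h p.1} ⊆
          (fun p : ℕ × ℕ => UUw p.1 p.2) ⁻¹'
            {U | U ∈ ⋃ n, F n ∧ ptw (BArr f g) (memB hf hg) ∈ U ∧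
              ptw (BArr g h) (memB hg hh) ∉ U} := by
        rintro p ⟨hp, h1, h2⟩
        refine ⟨hmem𝒱 p hp, ?_, ?_⟩
        · rw [ptw_mem, BArr_true']
          right
          exact h1
        · rw [ptw_mem, BArr_true']
          omega
      exact (Set.Finite.preimage (UUw_inj.injOn) hc).subset hsub
    · exfalso
      apply hinf
      have hsub : {p | p ∈ Pk ∧ f p.1 ≤ p.2 ∧ p.2 < g p.1} ⊆
          (fun p : ℕ × ℕ => UUw p.1 p.2) ⁻¹'
            {U | U ∈ ⋃ n, F n ∧ ptw (BArr g h) (memB hg hh) ∈ U ∧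
              ptw (BArr f g) (memB hf hg) ∉ U} := by
        rintro p ⟨hp, h1, h2⟩
        refine ⟨hmem𝒱 p hp, ?_, ?_⟩
        · rw [ptw_mem, BArr_true']
          left
          exact h2
        · rw [ptw_mem, BArr_true']
          omega
      exact (Set.Finite.preimage (UUw_inj.injOn) hc).subset hsub
  -- there is g whose upper windows are all finite
  have CC : ∃ g ∈ Gfam, ∀ h ∈ Gfam, {p | p ∈ Pk ∧ g p.1 ≤ p.2 ∧ p.2 < h p.1}.Finite := by
    by_cases hall : ∀ f ∈ Gfam, ∀ g ∈ Gfam, {p | p ∈ Pk ∧ f p.1 ≤ p.2 ∧ p.2 < g p.1}.Finite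
    · obtain ⟨g₀, hg₀⟩ := Gfam_ne
      exact ⟨g₀, hg₀, fun h hh => hall g₀ hg₀ h hh⟩
    · push_neg at hall
      obtain ⟨f, hf, g, hg, hinf⟩ := hall
      exact ⟨g, hg, poke f g hf hg hinf⟩
  obtain ⟨gs, hgs, havoid⟩ := CC
  set K : Set (ℕ × ℕ) := {p | p ∈ Pk ∧ AArr gs (p.1, p.2) = true} with hKdef
  have hKinf : K.Infinite := hits (AArr gs) (memA hgs)
  have hKP : ∀ p ∈ K, p ∈ Pk ∧ gs p.1 ≤ p.2 := by
    rintro p ⟨h1, h2⟩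
    exact ⟨h1, AArr_true'.mp h2⟩
  have hcol : ∀ n, {m | (n, m) ∈ Pk}.Finite := by
    intro n
    have h1 : {m | (n, m) ∈ Pk} = (fun m => UUw n m) ⁻¹' (F n) := rfl
    rw [h1]
    exact Set.Finite.preimage ((UUw_col_inj n).injOn) (hF n).1
  set N : Set ℕ := Prod.fst '' K with hNdef
  have hNinf : N.Infinite := by
    intro hNfin
    apply hKinf
    refine (Set.Finite.biUnion hNfin
      (fun n _ => ((hcol n).image (fun m => ((n, m) : ℕ × ℕ))))).subset ?_
    intro p hp
    exact Set.mem_biUnion ⟨p, hp, rfl⟩ ⟨p.2, (hKP p hp).1, rfl⟩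
  have hmwex : ∀ n ∈ N, ∃ m, (n, m) ∈ K := by
    rintro n ⟨p, hp, rfl⟩
    exact ⟨p.2, hp⟩
  set mw : ℕ → ℕ := fun n => if h : ∃ m, (n, m) ∈ K then h.choose else 0 with hmwdef
  have hmwK : ∀ n ∈ N, (n, mw n) ∈ K := by
    intro n hn
    have h := hmwex n hn
    simp only [hmwdef, dif_pos h]
    exact h.choose_spec
  set nk : ℕ → ℕ := fun k => (hNinf.exists_gt k).choose with hnkdef
  have hnk : ∀ k, nk k ∈ N ∧ k < nk k := fun k => (hNinf.exists_gt k).choose_spec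
  apply Gfam_unb
  refine ⟨fun k => mw (nk k), ?_⟩
  intro h hh
  have hbadfin : {p | p ∈ K ∧ ¬ h p.1 ≤ p.2}.Finite := by
    refine (havoid h hh).subset ?_
    rintro p ⟨hpK, hph⟩
    exact ⟨(hKP p hpK).1, (hKP p hpK).2, by omega⟩
  obtain ⟨M, hM⟩ := (hbadfin.image Prod.fst).bddAbove
  filter_upwards [Filter.eventually_ge_atTop (M + 1)] with k hk
  have h1 := (hnk k).1
  have h2 := (hnk k).2
  have h3 : (nk k, mw (nk k)) ∈ K := hmwK _ h1
  have h4 : h (nk k) ≤ mw (nk k) := by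
    by_contra hcon
    have h5 : nk k ∈ Prod.fst '' {p | p ∈ K ∧ ¬ h p.1 ≤ p.2} :=
      ⟨(nk k, mw (nk k)), ⟨h3, hcon⟩, rfl⟩
    have h6 := hM h5
    omega
  calc h k ≤ h (nk k) := Gfam_mono h hh (by omega)
    _ ≤ mw (nk k) := h4

private lemma Xw_infinite : Xw.Infinite := by
  have hinj : Function.Injective (fun k : ℕ => iow (PArr (0, k))) := by
    intro a b hab
    have h2 := iow_inj hab
    by_contra hne
    have h3 := congrFun h2 (0, a)
    simp only [PArr, decide_eq_decide] at h3
    simp only [ne_eq, not_true_eq_false, false_iff, not_not, Prod.mk.injEq] at h3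
    rcases h3 with ⟨-, h4⟩
    · exact hne h4
  exact Set.infinite_of_injective_forall_mem hinj (fun k => ⟨PArr (0, k), memP _, rfl⟩)

private lemma Xw_mk : Cardinal.mk Xw = bNum := by
  have h1 : Cardinal.mk Xw = Cardinal.mk 𝒜w := Cardinal.mk_image_eq iow_inj
  rw [h1]
  apply le_antisymm
  · have hsub : 𝒜w ⊆ (AArr '' Gfam) ∪
        ((fun q : (ℕ → ℕ) × (ℕ → ℕ) => BArr q.1 q.2) '' (Gfam ×ˢ Gfam)) ∪
        (PArr '' Set.univ) := by
      rintro A (⟨f, hf, rfl⟩ | ⟨f, hf, g, hg, rfl⟩ | ⟨q, rfl⟩)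
      · exact Or.inl (Or.inl ⟨f, hf, rfl⟩)
      · exact Or.inl (Or.inr ⟨(f, g), ⟨hf, hg⟩, rfl⟩)
      · exact Or.inr ⟨q, trivial, rfl⟩
    refine le_trans (Cardinal.mk_le_mk_of_subset hsub) ?_
    refine le_trans (Cardinal.mk_union_le _ _) ?_
    refine le_trans (add_le_add_left (Cardinal.mk_union_le _ _) _) ?_
    have hA : Cardinal.mk (AArr '' Gfam) = bNum := by
      rw [Cardinal.mk_image_eq AArr_inj, Gfam_mk]
    have hB : Cardinal.mk ((fun q : (ℕ → ℕ) × (ℕ → ℕ) => BArr q.1 q.2) '' (Gfam ×ˢ Gfam)) ≤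
        bNum := by
      refine le_trans Cardinal.mk_image_le ?_
      rw [Cardinal.mk_congr (Equiv.Set.prod _ _), Cardinal.mk_prod]
      simp only [Cardinal.lift_id, Gfam_mk]
      exact le_of_eq (Cardinal.mul_eq_self aleph0_le_bNum)
    have hP : Cardinal.mk (PArr '' (Set.univ : Set (ℕ × ℕ))) ≤ ℵ₀ := by
      refine le_trans Cardinal.mk_image_le ?_
      rw [Cardinal.mk_univ, Cardinal.mk_denumerable]
    calc Cardinal.mk (AArr '' Gfam) +
          Cardinal.mk ((fun q : (ℕ → ℕ) × (ℕ → ℕ) => BArr q.1 q.2) '' (Gfam ×ˢ Gfam)) +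
          Cardinal.mk (PArr '' (Set.univ : Set (ℕ × ℕ)))
        ≤ bNum + bNum + ℵ₀ := by
          refine add_le_add (add_le_add (le_of_eq hA) hB) hP
      _ = bNum := by
          rw [Cardinal.add_eq_self aleph0_le_bNum,
            Cardinal.add_eq_left aleph0_le_bNum aleph0_le_bNum]
  · have h2 : bNum = Cardinal.mk (AArr '' Gfam) := by
      rw [Cardinal.mk_image_eq AArr_inj, Gfam_mk]
    rw [h2]
    refine Cardinal.mk_le_mk_of_subset ?_
    rintro A ⟨f, hf, rfl⟩
    exact Or.inl ⟨f, hf, rfl⟩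

private lemma sfin_O_to_K (Y : Set Cantor) :
    SFin ↥Y (OGamma ↥Y) (OTau ↥Y) → SFin ↥Y (KGamma ↥Y) (KTau ↥Y) := by
  intro h U hU
  obtain ⟨F, hF, hT⟩ := h U (fun n => ⟨(hU n).1, fun V hV => ((hU n).2 V hV).isOpen⟩)
  refine ⟨F, hF, hT.1, ?_⟩
  intro V hV
  obtain ⟨n, hn⟩ := Set.mem_iUnion.mp hV
  exact (hU n).2 V ((hF n).2 hn)

private lemma Xw_not_SFinO : ¬ SFin ↥Xw (OGamma ↥Xw) (OTau ↥Xw) :=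
  fun h => Xw_not_SFinK (sfin_O_to_K _ h)

private lemma sfin_O_of_small (Y : Set Cantor) (hY : Cardinal.mk Y < bNum) :
    SFin ↥Y (OGamma ↥Y) (OTau ↥Y) := by
  intro U hU
  obtain ⟨F, hF, hT⟩ := sfin_of_small Y hY IsOpen U (fun n => ⟨(hU n).1, (hU n).2⟩)
  exact ⟨F, hF, hT.1, hT.2⟩

private lemma sfin_K_of_small (Y : Set Cantor) (hY : Cardinal.mk Y < bNum) :
    SFin ↥Y (KGamma ↥Y) (KTau ↥Y) := by
  intro U hU
  obtain ⟨F, hF, hT⟩ := sfin_of_small Y hY IsClopen U (fun n => ⟨(hU n).1, (hU n).2⟩)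
  exact ⟨F, hF, hT.1, hT.2⟩

end StmtThreeAux

/-- The critical cardinalities of Sfin(Γ,Τ) and Sfin(C_Γ,C_Τ) are both 𝔟. -/
theorem stmt3 :
    nonP (fun X => SFin ↥X (OGamma ↥X) (OTau ↥X)) = bNum ∧
    nonP (fun X => SFin ↥X (KGamma ↥X) (KTau ↥X)) = bNum := by
  constructor
  · apply le_antisymm
    · exact csInf_le' ⟨Xw, Xw_infinite, Xw_not_SFinO, Xw_mk⟩
    · refine le_csInf ⟨bNum, Xw, Xw_infinite, Xw_not_SFinO, Xw_mk⟩ ?_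
      rintro c ⟨Y, hYinf, hYn, rfl⟩
      by_contra hlt
      exact hYn (sfin_O_of_small Y (not_le.mp hlt))
  · apply le_antisymm
    · exact csInf_le' ⟨Xw, Xw_infinite, Xw_not_SFinK, Xw_mk⟩
    · refine le_csInf ⟨bNum, Xw, Xw_infinite, Xw_not_SFinK, Xw_mk⟩ ?_
      rintro c ⟨Y, hYinf, hYn, rfl⟩
      by_contra hlt
      exact hYn (sfin_K_of_small Y (not_le.mp hlt))

end
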